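/- For a finite group G, the power graph P(G) equals the order super power graph P^o(G) if and only if G is cyclic. -/

import Mathlib

/-- The power graph of a group `G`: distinct `x, y` are adjacent iff one is a power
of the other, i.e. `x ∈ ⟨y⟩` or `y ∈ ⟨x⟩`. -/
def powerGraph (G : Type*) [Group G] : SimpleGraph G :=
  SimpleGraph.fromRel (fun x y => x ∈ Subgroup.zpowers y)

/-- The enhanced power graph of a group `G`: distinct `x, y` are adjacent iff they lie
in a common cyclic subgroup. -/
def enhancedPowerGraph (G : Type*) [Group G] : SimpleGraph G :=
  SimpleGraph.fromRel
    (fun x y => ∃ z : G, x ∈ Subgroup.zpowers z ∧ y ∈ Subgroup.zpowers z)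

/-- The commuting graph of a group `G`: distinct `x, y` are adjacent iff they commute. -/
def commutingGraph (G : Type*) [Group G] : SimpleGraph G :=
  SimpleGraph.fromRel (fun x y => x * y = y * x)

/-- The order super graph of a graph `A` on a group `G`: distinct `x, y` are adjacent iff
they have the same order, or some elements of the same orders are adjacent in `A`. -/
def orderSuper (G : Type*) [Group G] (A : SimpleGraph G) : SimpleGraph G :=
  SimpleGraph.fromRel (fun x y =>
    orderOf x = orderOf y ∨
      ∃ x' y' : G, orderOf x' = orderOf x ∧ orderOf y' = orderOf y ∧ A.Adj x' y')

/-- The conjugacy super graph of a graph `A` on a group `G`: distinct `x, y` are adjacent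
iff they are conjugate, or some conjugates of them are adjacent in `A`. -/
def conjSuper (G : Type*) [Group G] (A : SimpleGraph G) : SimpleGraph G :=
  SimpleGraph.fromRel (fun x y =>
    IsConj x y ∨ ∃ x' y' : G, IsConj x x' ∧ IsConj y y' ∧ A.Adj x' y')

/-- A vertex of a simple graph is dominant if it is adjacent to every other vertex. -/
def IsDominantVertex {V : Type*} (Γ : SimpleGraph V) (v : V) : Prop :=
  ∀ w, w ≠ v → Γ.Adj v w


open Subgroup Finset

lemma zpowers_isCyclic {G : Type*} [Group G] (y : G) : IsCyclic (Subgroup.zpowers y) := by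
  refine ⟨⟨y, Subgroup.mem_zpowers y⟩, fun x => ?_⟩
  obtain ⟨k, hk⟩ := x.2
  exact ⟨k, Subtype.ext (by simpa using hk)⟩

lemma mem_zpowers_of_dvd {G : Type*} [Group G] [Fintype G] [IsCyclic G] {x y : G}
    (h : orderOf x ∣ orderOf y) : x ∈ Subgroup.zpowers y := by
  classical
  set d := orderOf y with hd
  have hd0 : 0 < d := orderOf_pos y
  have hle := IsCyclic.card_pow_eq_one_le (α := G) hd0
  have hsub : (Subgroup.zpowers y : Set G).toFinset ⊆ Finset.univ.filter (fun a => a ^ d = 1) := by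
    intro z hz
    rw [Set.mem_toFinset] at hz
    simp only [Finset.mem_filter, Finset.mem_univ, true_and]
    exact orderOf_dvd_iff_pow_eq_one.mp (orderOf_dvd_of_mem_zpowers hz)
  have hcard : (Subgroup.zpowers y : Set G).toFinset.card = d := by
    rw [Set.toFinset_card]
    simpa using (Fintype.card_zpowers (x := y))
  have heq := Finset.eq_of_subset_of_card_le hsub (by rw [hcard]; exact hle)
  have hx : x ∈ Finset.univ.filter (fun a => a ^ d = 1) := by
    simp only [Finset.mem_filter, Finset.mem_univ, true_and]
    exact orderOf_dvd_iff_pow_eq_one.mp h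
  rw [← heq, Set.mem_toFinset] at hx
  exact hx

lemma card_orderOf_le_totient {G : Type*} [Group G] [Fintype G] [DecidableEq G]
    (key : ∀ x y : G, orderOf x = orderOf y → x ∈ Subgroup.zpowers y) (m : ℕ) :
    (Finset.univ.filter fun a : G => orderOf a = m).card ≤ Nat.totient m := by
  rcases (Finset.univ.filter fun a : G => orderOf a = m).eq_empty_or_nonempty with he | ⟨y, hy⟩
  · simp [he]
  · rw [Finset.mem_filter] at hy
    obtain ⟨-, hym⟩ := hy
    have hScard : Fintype.card (Subgroup.zpowers y) = m := by
      rw [Fintype.card_zpowers]; exact hym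
    have hScyc : IsCyclic (Subgroup.zpowers y) := zpowers_isCyclic y
    have hmdvd : m ∣ Fintype.card (Subgroup.zpowers y) := by rw [hScard]
    have htot : (Finset.univ.filter fun z : (Subgroup.zpowers y) => orderOf z = m).card
        = Nat.totient m := IsCyclic.card_orderOf_eq_totient hmdvd
    rw [← htot, ← Finset.card_map ⟨_, Subtype.val_injective⟩]
    apply Finset.card_le_card
    intro a ha
    rw [Finset.mem_filter] at ha
    have haS : a ∈ Subgroup.zpowers y := key a y (ha.2.trans hym.symm)
    rw [Finset.mem_map]
    refine ⟨⟨a, haS⟩, ?_, rfl⟩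
    rw [Finset.mem_filter]
    exact ⟨Finset.mem_univ _, by rw [← Subgroup.orderOf_coe]; exact ha.2⟩

lemma isCyclic_of_key {G : Type*} [Group G] [Fintype G] [DecidableEq G]
    (key : ∀ x y : G, orderOf x = orderOf y → x ∈ Subgroup.zpowers y) : IsCyclic G := by
  apply isCyclic_of_card_pow_eq_one_le
  intro n hn
  rw [← sum_card_orderOf_eq_card_pow_eq_one hn.ne']
  calc (∑ m ∈ n.divisors, (Finset.univ.filter fun a : G => orderOf a = m).card)
      ≤ ∑ m ∈ n.divisors, Nat.totient m :=
        Finset.sum_le_sum fun m _ => card_orderOf_le_totient key m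
    _ = n := Nat.sum_totient n

/-- For a finite group `G`, the power graph equals the order super power graph iff
`G` is cyclic. -/
theorem powerGraph_eq_orderSuper_iff_isCyclic (G : Type*) [Group G] [Fintype G] :
    powerGraph G = orderSuper G (powerGraph G) ↔ IsCyclic G := by
  classical
  constructor
  · intro h
    apply isCyclic_of_key
    intro x y hxy
    by_cases hne : x = y
    · exact hne ▸ Subgroup.mem_zpowers x
    · have adj : (orderSuper G (powerGraph G)).Adj x y :=
        (SimpleGraph.fromRel_adj _ x y).mpr ⟨hne, Or.inl (Or.inl hxy)⟩
      rw [← h] at adj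
      obtain ⟨-, h1 | h1⟩ := (SimpleGraph.fromRel_adj _ x y).mp adj
      · exact h1
      · have hle : Subgroup.zpowers y ≤ Subgroup.zpowers x := Subgroup.zpowers_le.mpr h1
        have heq : Subgroup.zpowers y = Subgroup.zpowers x :=
          Subgroup.eq_of_le_of_card_ge hle (by rw [Nat.card_zpowers, Nat.card_zpowers, hxy])
        rw [heq]
        exact Subgroup.mem_zpowers x
  · intro hcyc
    ext x y
    rw [powerGraph, orderSuper, SimpleGraph.fromRel_adj, SimpleGraph.fromRel_adj]
    constructor
    · rintro ⟨hne, hmem⟩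
      exact ⟨hne, Or.inl (Or.inr ⟨x, y, rfl, rfl,
        (SimpleGraph.fromRel_adj _ x y).mpr ⟨hne, hmem⟩⟩)⟩
    · rintro ⟨hne, hcond⟩
      refine ⟨hne, ?_⟩
      have hdvd : orderOf x ∣ orderOf y ∨ orderOf y ∣ orderOf x := by
        rcases hcond with (heq | ⟨a, b, ha, hb, hab⟩) | (heq | ⟨a, b, ha, hb, hab⟩)
        · exact Or.inl (heq ▸ dvd_refl _)
        · obtain ⟨-, hm | hm⟩ := (SimpleGraph.fromRel_adj _ a b).mp hab
          · exact Or.inl (ha ▸ hb ▸ orderOf_dvd_of_mem_zpowers hm)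
          · exact Or.inr (ha ▸ hb ▸ orderOf_dvd_of_mem_zpowers hm)
        · exact Or.inr (heq ▸ dvd_refl _)
        · obtain ⟨-, hm | hm⟩ := (SimpleGraph.fromRel_adj _ a b).mp hab
          · exact Or.inr (ha ▸ hb ▸ orderOf_dvd_of_mem_zpowers hm)
          · exact Or.inl (ha ▸ hb ▸ orderOf_dvd_of_mem_zpowers hm)
      rcases hdvd with h | h
      · exact Or.inl (mem_zpowers_of_dvd h)
      · exact Or.inr (mem_zpowers_of_dvd h)
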